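/- Let ω be C¹ near t with ω(t) ≠ 0, and set β₊(Δt) = ∫_t^{t+Δt} ω(τ)dτ and β₋(Δt) = −∫_t^{t−Δt} ω(τ)dτ. Then lim_{Δt→0⁺} (1/Δt)·ln(sin β₊(Δt)/sin β₋(Δt)) = ω̇(t)/ω(t). -/

import Mathlib

open Real Filter MeasureTheory Set

lemma aux_log_near_one {y : ℝ} (h : |y - 1| ≤ 1/2) : |Real.log y| ≤ 2 * |y - 1| := by
  have h1 : (1:ℝ)/2 ≤ y := by cases abs_le.mp h with | intro a b => linarith
  have hy : 0 < y := by linarith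
  have h2 : Real.log y ≤ y - 1 := Real.log_le_sub_one_of_pos hy
  have h3 : Real.log y⁻¹ ≤ y⁻¹ - 1 := Real.log_le_sub_one_of_pos (by positivity)
  rw [Real.log_inv] at h3
  have h4 : -Real.log y ≤ (1 - y)/y := by
    have e : y⁻¹ - 1 = (1-y)/y := by field_simp
    linarith [e ▸ h3]
  have h5 : (1 - y)/y ≤ 2 * |y - 1| := by
    have e1 : (1-y)/y ≤ |y-1|/y := by
      gcongr
      rw [abs_sub_comm]; exact le_abs_self _
    have e2 : |y-1|/y ≤ |y-1|/(1/2) := by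
      apply div_le_div_of_nonneg_left (abs_nonneg _) (by norm_num) h1
    calc (1-y)/y ≤ |y-1|/y := e1
      _ ≤ |y-1|/(1/2) := e2
      _ = 2 * |y-1| := by ring
  rw [abs_le]
  constructor
  · linarith
  · calc Real.log y ≤ y - 1 := h2
      _ ≤ |y - 1| := le_abs_self _
      _ ≤ 2 * |y - 1| := by linarith [abs_nonneg (y-1)]

lemma aux_sin_sub {x : ℝ} (hx : |x| ≤ 1/2) : |Real.sin x - x| ≤ |x|^3 := by
  have h1 : |Real.sin x - (x - x^3/6)| ≤ |x|^4 * (5/96) := by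
    have h0 := Real.sin_bound (x := x) (by linarith)
    have h4' := pow_nonneg (abs_nonneg x) 4
    have h5' : |x|^5 = |x|^4 * |x| := by ring
    nlinarith [mul_le_mul_of_nonneg_left hx h4']
  have h4 : |x|^4 = |x|^3 * |x| := by ring
  have h5 : |x|^3 * |x| ≤ |x|^3 * (1/2) := by
    apply mul_le_mul_of_nonneg_left hx (by positivity)
  have h6 : |x^3/6| = |x|^3/6 := by rw [abs_div, abs_pow]; norm_num
  calc |Real.sin x - x| = |(Real.sin x - (x - x^3/6)) + (-(x^3/6))| := by ring_nf
    _ ≤ |Real.sin x - (x - x^3/6)| + |(-(x^3/6))| := abs_add_le _ _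
    _ = |Real.sin x - (x - x^3/6)| + |x^3/6| := by rw [abs_neg]
    _ ≤ |x|^4 * (5/96) + |x|^3/6 := by rw [h6]; linarith
    _ ≤ |x|^3 := by nlinarith [abs_nonneg x, pow_nonneg (abs_nonneg x) 3]

lemma aux_sin_ratio {x : ℝ} (hx0 : x ≠ 0) (hx : |x| ≤ 1/2) : |Real.sin x / x - 1| ≤ x^2 := by
  have hax : 0 < |x| := abs_pos.mpr hx0
  have e : Real.sin x / x - 1 = (Real.sin x - x)/x := by field_simp
  rw [e, abs_div, div_le_iff₀ hax]
  calc |Real.sin x - x| ≤ |x|^3 := aux_sin_sub hx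
    _ = x^2 * |x| := by rw [← sq_abs]; ring

lemma aux_log_one_add {u : ℝ} (h : |u| ≤ 1/2) : |Real.log (1 + u) - u| ≤ 2 * u^2 := by
  have h1 : (1:ℝ)/2 ≤ 1 + u := by cases abs_le.mp h with | intro a b => linarith
  have hy : 0 < 1 + u := by linarith
  have h2 : Real.log (1+u) ≤ u := by
    have := Real.log_le_sub_one_of_pos hy; linarith
  have h3 : Real.log (1+u)⁻¹ ≤ (1+u)⁻¹ - 1 := Real.log_le_sub_one_of_pos (by positivity)
  rw [Real.log_inv] at h3
  have h4 : u - u^2/(1+u) ≤ Real.log (1+u) := by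
    have e : (1+u)⁻¹ - 1 = -u/(1+u) := by field_simp; ring
    rw [e] at h3
    have e2 : -(-u/(1+u)) = u - u^2/(1+u) := by field_simp; ring
    linarith [e2 ▸ (neg_le_neg h3)]
  have h5 : u^2/(1+u) ≤ 2*u^2 := by
    rw [div_le_iff₀ hy]; nlinarith [sq_nonneg u]
  rw [abs_le]; constructor <;> nlinarith [sq_nonneg u]

set_option maxHeartbeats 1000000 in
/-- lim_{Δt→0⁺} (1/Δt)·ln(sin β₊/sin β₋) = ω̇(t)/ω(t), where
β₊ = ∫_t^{t+Δt} ω and β₋ = −∫_t^{t−Δt} ω. -/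
theorem stmt13 (ω : ℝ → ℝ) (t : ℝ) (hω : ContDiffAt ℝ 1 ω t) (hωt : ω t ≠ 0) :
    Filter.Tendsto (fun Δt : ℝ =>
        (1/Δt) * Real.log (Real.sin (∫ τ in t..(t+Δt), ω τ)
          / Real.sin (-(∫ τ in t..(t-Δt), ω τ))))
      (nhdsWithin 0 (Set.Ioi 0)) (nhds (deriv ω t / ω t)) := by
  obtain ⟨ω', u, hu_nhds, hω'cont, hω'deriv⟩ := contDiffAt_one_iff.mp hω
  set l := nhdsWithin (0:ℝ) (Set.Ioi 0) with hl
  set c := |ω t| with hc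
  have hcpos : 0 < c := abs_pos.mpr hωt
  set d := deriv ω t with hd
  have ht_u : t ∈ u := mem_of_mem_nhds hu_nhds
  have hder : HasDerivAt ω d t := (hω.differentiableAt (by norm_num)).hasDerivAt
  -- continuity of ω near t
  have hcontAt : ∀ x ∈ u, ContinuousAt ω x := fun x hx =>
    (hω'deriv x hx).differentiableAt.continuousAt
  obtain ⟨ε₁, hε₁pos, hball₁⟩ := Metric.mem_nhds_iff.mp hu_nhds
  obtain ⟨ε₂, hε₂pos, hε₂⟩ := Metric.continuousAt_iff.mp (hcontAt t ht_u) (c/2) (by positivity)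
  set ε := min ε₁ ε₂ with hε
  have hεpos : 0 < ε := lt_min hε₁pos hε₂pos
  have hωCont : ContinuousOn ω (Metric.ball t ε) := fun y hy =>
    (hcontAt y (hball₁ (Metric.ball_subset_ball (min_le_left _ _) hy))).continuousWithinAt
  have hbound : ∀ y ∈ Metric.ball t ε, |ω y - ω t| ≤ c/2 := by
    intro y hy
    have : dist y t < ε₂ := lt_of_lt_of_le (Metric.mem_ball.mp hy) (min_le_right _ _)
    exact le_of_lt (by simpa [Real.dist_eq] using hε₂ this)
  -- the basic integral functions
  set G : ℝ → ℝ := fun s => ∫ τ in t..(t+s), ω τ with hGdef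
  set B : ℝ → ℝ := fun s => -(∫ τ in t..(t-s), ω τ) with hBdef
  have hBG : ∀ s, B s = -G (-s) := by intro s; simp [hGdef, hBdef, sub_eq_add_neg]
  have huIcc : ∀ s : ℝ, |s| < ε → Set.uIcc t (t+s) ⊆ Metric.ball t ε := by
    intro s hs τ hτ
    rw [Set.mem_uIcc] at hτ
    rw [Metric.mem_ball, Real.dist_eq, abs_lt]
    have := abs_lt.mp hs
    rcases hτ with ⟨h1, h2⟩ | ⟨h1, h2⟩ <;> constructor <;> linarith [this.1, this.2]
  have hInt : ∀ s : ℝ, |s| < ε → IntervalIntegrable ω volume t (t+s) := fun s hs =>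
    (hωCont.mono (huIcc s hs)).intervalIntegrable
  have hG0 : G 0 = 0 := by simp [hGdef]
  have hG : ∀ s : ℝ, |s| < ε → HasDerivAt G (ω (t+s)) s := by
    intro s hs
    have hmem : t + s ∈ Metric.ball t ε := by
      rw [Metric.mem_ball, Real.dist_eq]; simpa using hs
    have h1 : HasDerivAt (fun b => ∫ τ in t..b, ω τ) (ω (t+s)) (t+s) :=
      intervalIntegral.integral_hasDerivAt_right (hInt s hs)
        (hωCont.stronglyMeasurableAtFilter Metric.isOpen_ball _ hmem)
        (hωCont.continuousAt (Metric.isOpen_ball.mem_nhds hmem))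
    have h2 : HasDerivAt (fun x : ℝ => t + x) 1 s := (hasDerivAt_id s).const_add t
    simpa [Function.comp_def] using h1.comp s h2
  have hGneg : ∀ s : ℝ, |s| < ε → HasDerivAt (fun x => G (-x)) (-ω (t-s)) s := by
    intro s hs
    have h1 : HasDerivAt G (ω (t + -s)) (-s) := hG (-s) (by rwa [abs_neg])
    have := h1.comp s (hasDerivAt_neg s)
    simpa [sub_eq_add_neg, Function.comp_def] using this
  have hB' : ∀ s : ℝ, |s| < ε → HasDerivAt B (ω (t-s)) s := by
    intro s hs
    have := (hGneg s hs).neg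
    have e : B = fun x => -G (-x) := funext hBG
    rw [e]; simpa [Pi.neg_def] using this
  have hB0 : B 0 = 0 := by simp [hBdef]
  -- slope limits
  have hlle : l ≤ nhdsWithin (0:ℝ) {(0:ℝ)}ᶜ :=
    nhdsWithin_mono 0 (fun x hx => ne_of_gt hx)
  have hε0 : |(0:ℝ)| < ε := by simpa using hεpos
  have hslopeG : Filter.Tendsto (fun Δt => G Δt / Δt) l (nhds (ω t)) := by
    have h1 := hasDerivAt_iff_tendsto_slope.mp (by simpa using hG 0 hε0)
    refine ((h1.mono_left hlle).congr' ?_)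
    filter_upwards [self_mem_nhdsWithin] with x hx
    simp [slope_def_field, hG0]
  have hslopeB : Filter.Tendsto (fun Δt => B Δt / Δt) l (nhds (ω t)) := by
    have h1 := hasDerivAt_iff_tendsto_slope.mp (by simpa using hB' 0 hε0)
    refine ((h1.mono_left hlle).congr' ?_)
    filter_upwards [self_mem_nhdsWithin] with x hx
    simp [slope_def_field, hB0]
  -- L'Hopital for D(s) = G s + G (-s)
  have hDf : ∀ s : ℝ, |s| < ε → HasDerivAt (fun x => G x + G (-x)) (ω (t+s) - ω (t-s)) s := by
    intro s hs
    have := (hG s hs).add (hGneg s hs)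
    simpa [sub_eq_add_neg, Pi.add_def] using this
  have hIoo : Set.Ioo (0:ℝ) ε ∈ l := Ioo_mem_nhdsGT_of_mem ⟨le_rfl, hεpos⟩
  have habs : ∀ s : ℝ, s ∈ Set.Ioo (0:ℝ) ε → |s| < ε := by
    intro s hs; rw [abs_of_pos hs.1]; exact hs.2
  have hslopeω := hasDerivAt_iff_tendsto_slope.mp hder
  have hplus : Filter.Tendsto (fun s : ℝ => t + s) l (nhdsWithin t {t}ᶜ) := by
    rw [tendsto_nhdsWithin_iff]
    constructor
    · have : Filter.Tendsto (fun s : ℝ => t + s) (nhds 0) (nhds (t+0)) :=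
        (continuous_const.add continuous_id).tendsto 0
      simpa using this.mono_left nhdsWithin_le_nhds
    · filter_upwards [self_mem_nhdsWithin] with s hs
      simp only [Set.mem_compl_iff, Set.mem_singleton_iff]
      intro h; have : s = 0 := by linarith [h]
      exact absurd this (ne_of_gt hs)
  have hminus : Filter.Tendsto (fun s : ℝ => t - s) l (nhdsWithin t {t}ᶜ) := by
    rw [tendsto_nhdsWithin_iff]
    constructor
    · have : Filter.Tendsto (fun s : ℝ => t - s) (nhds 0) (nhds (t-0)) :=
        (continuous_const.sub continuous_id).tendsto 0
      simpa using this.mono_left nhdsWithin_le_nhds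
    · filter_upwards [self_mem_nhdsWithin] with s hs
      simp only [Set.mem_compl_iff, Set.mem_singleton_iff]
      intro h; have : s = 0 := by linarith [h]
      exact absurd this (ne_of_gt hs)
  have hdiv : Filter.Tendsto (fun s => (ω (t+s) - ω (t-s)) / (2*s)) l (nhds d) := by
    have h1 := hslopeω.comp hplus
    have h2 := hslopeω.comp hminus
    have h3 := (h1.add h2).div_const 2
    rw [show (d+d)/2 = d by ring] at h3
    refine h3.congr' ?_
    filter_upwards [self_mem_nhdsWithin] with s hs
    have hs0 : s ≠ 0 := ne_of_gt hs
    simp only [Function.comp, slope_def_field]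
    have e1 : t + s - t = s := by ring
    have e2 : t - s - t = -s := by ring
    rw [e1, e2, div_neg, ← neg_div, ← add_div, div_div, mul_comm s 2]
    congr 1
    ring
  have hD : Filter.Tendsto (fun s => (G s + G (-s)) / s^2) l (nhds d) := by
    apply HasDerivAt.lhopital_zero_nhdsGT
      (f' := fun s => ω (t+s) - ω (t-s)) (g' := fun s => 2*s)
    · filter_upwards [hIoo] with s hs; exact hDf s (habs s hs)
    · filter_upwards [hIoo] with s _; simpa using hasDerivAt_pow 2 s
    · filter_upwards [self_mem_nhdsWithin] with s hs
      have : (0:ℝ) < s := hs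
      positivity
    · have h0 : |(0:ℝ)| < ε := hε0
      have hct := (hDf 0 h0).continuousAt
      have := hct.tendsto.mono_left (nhdsWithin_le_nhds (s := Set.Ioi (0:ℝ)))
      simpa [hG0] using this
    · have : Filter.Tendsto (fun s : ℝ => s^2) (nhds 0) (nhds ((0:ℝ)^2)) :=
        (continuous_pow 2).tendsto 0
      simpa using this.mono_left nhdsWithin_le_nhds
    · exact hdiv
  -- quantitative bounds
  have hGbound : ∀ s : ℝ, |s| < ε → |G s - ω t * s| ≤ c/2 * |s| := by
    intro s hs
    have h1 : G s - ω t * s = ∫ τ in t..(t+s), (ω τ - ω t) := by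
      rw [intervalIntegral.integral_sub (hInt s hs) intervalIntegrable_const,
        intervalIntegral.integral_const]
      simp [hGdef, smul_eq_mul]; ring
    rw [h1]
    have h2 : ∀ x ∈ Set.uIoc t (t+s), ‖ω x - ω t‖ ≤ c/2 := by
      intro x hx
      exact hbound x (huIcc s hs (Set.uIoc_subset_uIcc hx))
    have := intervalIntegral.norm_integral_le_of_norm_le_const h2
    simpa [Real.norm_eq_abs] using this
  have hBbound : ∀ s : ℝ, |s| < ε → |B s - ω t * s| ≤ c/2 * |s| := by
    intro s hs
    have h1 := hGbound (-s) (by rwa [abs_neg])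
    have e : B s - ω t * s = -(G (-s) - ω t * (-s)) := by rw [hBG]; ring
    rw [e, abs_neg]
    simpa [abs_neg] using h1
  -- region δ
  set δ := min ε (1/(1+3*c)) with hδdef
  have hδpos : 0 < δ := lt_min hεpos (by positivity)
  have hkey : ∀ s : ℝ, 0 < s → s < δ →
      (c/2 * s ≤ |G s| ∧ |G s| ≤ 3*c/2 * s ∧ |G s| ≤ 1/2 ∧ G s ≠ 0) ∧
      (c/2 * s ≤ |B s| ∧ |B s| ≤ 3*c/2 * s ∧ |B s| ≤ 1/2 ∧ B s ≠ 0) := by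
    intro s hs0 hsδ
    have hsε : |s| < ε := by rw [abs_of_pos hs0]; exact lt_of_lt_of_le hsδ (min_le_left _ _)
    have hsc : s ≤ 1/(1+3*c) := le_of_lt (lt_of_lt_of_le hsδ (min_le_right _ _))
    have habs : |ω t * s| = c * s := by rw [abs_mul, abs_of_pos hs0]
    have key : ∀ F : ℝ → ℝ, |F s - ω t * s| ≤ c/2 * |s| →
        c/2 * s ≤ |F s| ∧ |F s| ≤ 3*c/2 * s ∧ |F s| ≤ 1/2 ∧ F s ≠ 0 := by
      intro F hF
      rw [abs_of_pos hs0] at hF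
      have l1 : c/2 * s ≤ |F s| := by
        have := abs_sub_abs_le_abs_sub (ω t * s) (F s)
        rw [abs_sub_comm] at this
        rw [habs] at this
        linarith
      have l2 : |F s| ≤ 3*c/2 * s := by
        have := abs_sub_abs_le_abs_sub (F s) (ω t * s)
        rw [habs] at this
        linarith
      refine ⟨l1, l2, ?_, ?_⟩
      · have : 3*c/2 * s ≤ 3*c/2 * (1/(1+3*c)) := by
          apply mul_le_mul_of_nonneg_left hsc (by positivity)
        have h2 : 3*c/2 * (1/(1+3*c)) ≤ 1/2 := by
          rw [mul_one_div, div_le_div_iff₀ (by positivity) (by norm_num : (0:ℝ) < 2)]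
          linarith
        linarith
      · intro h
        rw [h, abs_zero] at l1
        nlinarith
    exact ⟨key G (hGbound s hsε), key B (hBbound s hsε)⟩
  -- main U limit
  have hu : Filter.Tendsto (fun Δt => (G Δt / B Δt - 1)/Δt) l (nhds (d / ω t)) := by
    have h := hD.div hslopeB hωt
    refine h.congr' ?_
    filter_upwards [Ioo_mem_nhdsGT_of_mem (Set.left_mem_Ico.mpr hδpos)] with s hs
    obtain ⟨_, hB⟩ := hkey s hs.1 hs.2
    have hs0 : s ≠ 0 := ne_of_gt hs.1
    have hBne : B s ≠ 0 := hB.2.2.2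
    have e : G s + G (-s) = G s - B s := by rw [hBG]; ring
    simp only [Pi.div_apply]
    rw [e]
    field_simp
  have hU0 : Filter.Tendsto (fun Δt => G Δt / B Δt - 1) l (nhds 0) := by
    have hid : Filter.Tendsto (fun Δt : ℝ => Δt) l (nhds 0) :=
      tendsto_id.mono_left nhdsWithin_le_nhds
    have := hu.mul hid
    rw [mul_zero] at this
    refine this.congr' ?_
    filter_upwards [self_mem_nhdsWithin] with s hs
    have : s ≠ 0 := ne_of_gt hs
    field_simp
  -- eventual smallness of U
  have hUsmall : ∀ᶠ Δt in l, |G Δt / B Δt - 1| ≤ 1/2 := by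
    have hmem : {x : ℝ | |x| ≤ 1/2} ∈ nhds (0:ℝ) := by
      have := Metric.closedBall_mem_nhds (0:ℝ) (by norm_num : (0:ℝ) < 1/2)
      simpa [Metric.closedBall, Real.dist_eq, Set.setOf_subset_setOf] using this
    exact hU0.eventually (eventually_of_mem hmem (fun x hx => hx))
  have hIooδ : Set.Ioo (0:ℝ) δ ∈ l := Ioo_mem_nhdsGT_of_mem ⟨le_rfl, hδpos⟩
  -- squeeze for the sinc terms
  have hsq : ∀ F : ℝ → ℝ, (∀ s, 0 < s → s < δ →
        (c/2*s ≤ |F s| ∧ |F s| ≤ 3*c/2*s ∧ |F s| ≤ 1/2 ∧ F s ≠ 0)) →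
      Filter.Tendsto (fun Δt => (1/Δt) * Real.log (Real.sin (F Δt) / F Δt)) l (nhds 0) := by
    intro F hF
    apply squeeze_zero_norm' (a := fun Δt => (2*(3*c/2)^2)*Δt)
    · filter_upwards [hIooδ] with s hs
      obtain ⟨hl1, hl2, hl3, hl4⟩ := hF s hs.1 hs.2
      have hs0 := hs.1
      have hratio : |Real.sin (F s)/(F s) - 1| ≤ (F s)^2 := aux_sin_ratio hl4 hl3
      have hF2 : (F s)^2 ≤ (3*c/2*s)^2 := by
        rw [← sq_abs (F s)]
        exact pow_le_pow_left₀ (abs_nonneg _) hl2 2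
      have hF2' : (F s)^2 ≤ 1/2 := by
        rw [← sq_abs (F s)]
        nlinarith [abs_nonneg (F s)]
      have hratio2 : |Real.sin (F s)/(F s) - 1| ≤ 1/2 := hratio.trans hF2'
      have hlog : |Real.log (Real.sin (F s)/(F s))| ≤ 2*(3*c/2*s)^2 := by
        refine (aux_log_near_one hratio2).trans ?_
        nlinarith
      rw [Real.norm_eq_abs, abs_mul, abs_of_pos (by positivity : (0:ℝ) < 1/s)]
      calc 1/s * |Real.log (Real.sin (F s)/(F s))| ≤ 1/s * (2*(3*c/2*s)^2) :=
            mul_le_mul_of_nonneg_left hlog (by positivity)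
        _ = 2*(3*c/2)^2*s := by field_simp
    · have h := (continuous_const.mul continuous_id).tendsto (0:ℝ)
        (f := fun Δt : ℝ => (2*(3*c/2)^2)*Δt)
      simpa using h.mono_left nhdsWithin_le_nhds
  have T1 := hsq G (fun s h1 h2 => (hkey s h1 h2).1)
  have T2 := hsq B (fun s h1 h2 => (hkey s h1 h2).2)
  have T3 : Filter.Tendsto (fun Δt => (1/Δt) *
      (Real.log (1 + (G Δt/B Δt - 1)) - (G Δt/B Δt - 1))) l (nhds 0) := by
    apply squeeze_zero_norm' (a := fun Δt => 2 * |(G Δt/B Δt - 1)/Δt| * |G Δt/B Δt - 1|)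
    · filter_upwards [hUsmall, self_mem_nhdsWithin] with s hU hs
      have hs0 : (0:ℝ) < s := hs
      have h1 := aux_log_one_add hU
      rw [Real.norm_eq_abs, abs_mul, abs_of_pos (by positivity : (0:ℝ) < 1/s)]
      calc 1/s * |Real.log (1 + (G s/B s - 1)) - (G s/B s - 1)|
            ≤ 1/s * (2*(G s/B s - 1)^2) := mul_le_mul_of_nonneg_left h1 (by positivity)
        _ = 2 * |(G s/B s - 1)/s| * |G s/B s - 1| := by
            rw [abs_div, abs_of_pos hs0, ← sq_abs (G s/B s - 1)]
            ring
    · have h := (hu.abs.const_mul 2).mul hU0.abs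
      simpa using h
  -- final assembly
  have Tsum := (T1.sub T2).add (T3.add hu)
  have elim : (0:ℝ) - 0 + (0 + d/ω t) = d / ω t := by ring
  rw [elim] at Tsum
  refine Tsum.congr' ?_
  filter_upwards [hIooδ, hUsmall] with s hs hU
  obtain ⟨⟨hGl, hGu, hG12, hGne⟩, hBl, hBu, hB12, hBne⟩ := hkey s hs.1 hs.2
  have hs0 : s ≠ 0 := ne_of_gt hs.1
  have e1 : (∫ τ in t..(t+s), ω τ) = G s := rfl
  have e2 : -(∫ τ in t..(t-s), ω τ) = B s := rfl

  rw [e1, e2]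
  -- sin a ≠ 0 facts
  have hsinne : ∀ x : ℝ, x ≠ 0 → |x| ≤ 1/2 → Real.sin x ≠ 0 := by
    intro x hx0 hx12 hcon
    have h := aux_sin_ratio hx0 hx12
    rw [hcon, zero_div] at h
    have : (x:ℝ)^2 ≤ 1/4 := by
      rw [← sq_abs]; nlinarith [abs_nonneg x]
    rw [abs_sub_comm] at h
    simp at h
    linarith
  have hsinG : Real.sin (G s) ≠ 0 := hsinne _ hGne hG12
  have hsinB : Real.sin (B s) ≠ 0 := hsinne _ hBne hB12
  have key : Real.log (Real.sin (G s) / Real.sin (B s)) =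
      Real.log (Real.sin (G s)/(G s)) - Real.log (Real.sin (B s)/(B s))
        + Real.log (G s / B s) := by
    rw [Real.log_div hsinG hsinB, Real.log_div hsinG hGne, Real.log_div hsinB hBne,
      Real.log_div hGne hBne]
    ring
  have e3 : 1 + (G s/B s - 1) = G s / B s := by ring
  rw [e3, key]
  ring
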